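/- Let X be a real vector space, â and b symmetric bilinear forms on X, and â_h and b_h bilinear forms on X. Let λ, λ_h ∈ ℝ and p, p_h ∈ X be such that â(p, v) = λ·b(p, v) for all v ∈ X, and â_h(p_h, p_h) = λ_h·b_h(p_h, p_h). Then (λ_h − λ)·b(p_h, p_h) = [â(p − p_h, p − p_h) − λ·b(p − p_h, p − p_h)] + [â_h(p_h, p_h) − â(p_h, p_h)] + λ_h·[b(p_h, p_h) − b_h(p_h, p_h)]. -/
import Mathlib

/-- The algebraic identity behind the double order of convergence:
if `â(p,v) = λ b(p,v)` for all `v` and `â_h(p_h,p_h) = λ_h b_h(p_h,p_h)`, then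
`(λ_h − λ)·b(p_h,p_h) = [â(p−p_h,p−p_h) − λ b(p−p_h,p−p_h)]
  + [â_h(p_h,p_h) − â(p_h,p_h)] + λ_h[b(p_h,p_h) − b_h(p_h,p_h)]`. -/
theorem eigenvalue_error_identity
    {X : Type*} [AddCommGroup X] [Module ℝ X]
    (ahat b ahath bh : X →ₗ[ℝ] X →ₗ[ℝ] ℝ)
    (hahat_symm : ∀ u v : X, ahat u v = ahat v u)
    (hb_symm : ∀ u v : X, b u v = b v u)
    (lam lamh : ℝ) (p ph : X)
    (hp : ∀ v : X, ahat p v = lam * b p v)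
    (hph : ahath ph ph = lamh * bh ph ph) :
    (lamh - lam) * b ph ph =
      (ahat (p - ph) (p - ph) - lam * b (p - ph) (p - ph)) +
        (ahath ph ph - ahat ph ph) + lamh * (b ph ph - bh ph ph) := by
  have h1 : ahat ph p = lam * b p ph := by rw [← hahat_symm]; exact hp ph
  have h2 := hp p
  simp only [map_sub, LinearMap.sub_apply] at *
  have hbs := hb_symm p ph
  linear_combination -h2 + hp ph + h1 - hph + lam * hbs
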